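/- arXiv:1006.4864 — 2 statements merged into one kernel-verified Lean document; each statement's English description precedes it below -/
import Mathlib

section
/- Let B, B₁, …, Bₙ : ℝ → ℝ be continuous functions with B(0) = Bⱼ(0) = 0, let θ > 0, and suppose the integrals below converge. Define u₀(t) = B(t), and inductively for k ≥ 1: r_k(t) = log ∫_{-∞}^t exp(u_{k-1}(s,t) − θ(t−s) + B_k(s,t)) ds and u_k(t) = u_{k-1}(t) + r_k(0) − r_k(t), where f(s,t) denotes f(t) − f(s). Define Z_n^θ(t) = ∫_{-∞<s₀<⋯<s_{n-1}<t} exp(−B(s₀) + θs₀ + B₁(s₀,s₁) + ⋯ + Bₙ(s_{n-1},t)) ds₀⋯ds_{n-1}. Then Σ_{k=1}^n r_k(t) = B(t) − θt + log Z_n^θ(t). -/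
open MeasureTheory

/-- `nxt t s k` is `s k` for `k < n` and `t` for `k ≥ n`. -/
noncomputable def nxt (t : ℝ) {n : ℕ} (s : Fin n → ℝ) (k : ℕ) : ℝ :=
  if h : k < n then s ⟨k, h⟩ else t

/-- Partition function of the O'Connell–Yor polymer with boundary:
`Z_n^θ(t) = ∫_{-∞<s₀<⋯<s_{n-1}<t} exp(−B(s₀)+θs₀+B₁(s₀,s₁)+⋯+Bₙ(s_{n-1},t)) ds`. -/
noncomputable def Zbdry (B : ℝ → ℝ) (Bf : ℕ → ℝ → ℝ) (θ : ℝ) (n : ℕ) (t : ℝ) : ℝ :=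
  ∫ s in {s : Fin n → ℝ | StrictMono s ∧ ∀ i, s i < t},
    Real.exp (-B (nxt t s 0) + θ * nxt t s 0 +
      ∑ k ∈ Finset.range n, (Bf (k + 1) (nxt t s (k + 1)) - Bf (k + 1) (nxt t s k)))


namespace OY

/-- The integrand of `Zbdry`. -/
noncomputable def f (B : ℝ → ℝ) (Bf : ℕ → ℝ → ℝ) (θ : ℝ) (m : ℕ) (t : ℝ) (s : Fin m → ℝ) : ℝ :=
  Real.exp (-B (nxt t s 0) + θ * nxt t s 0 +
    ∑ k ∈ Finset.range m, (Bf (k + 1) (nxt t s (k + 1)) - Bf (k + 1) (nxt t s k)))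

def S (m : ℕ) (t : ℝ) : Set (Fin m → ℝ) := {s | StrictMono s ∧ ∀ i, s i < t}

variable {B : ℝ → ℝ} {Bf : ℕ → ℝ → ℝ} {θ : ℝ}

lemma f_pos (m : ℕ) (t : ℝ) (s : Fin m → ℝ) : 0 < f B Bf θ m t s := Real.exp_pos _

lemma continuous_nxt {m : ℕ} (t : ℝ) (k : ℕ) : Continuous (fun s : Fin m → ℝ => nxt t s k) := by
  unfold nxt
  by_cases h : k < m
  · simpa [h] using continuous_apply (⟨k, h⟩ : Fin m)
  · simpa [h] using continuous_const

lemma continuous_f (hB : Continuous B) (hBf : ∀ k, Continuous (Bf k)) (m : ℕ) (t : ℝ) :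
    Continuous (f B Bf θ m t) := by
  apply Real.continuous_exp.comp
  apply Continuous.add
  · exact ((hB.comp (continuous_nxt t 0)).neg).add ((continuous_const).mul (continuous_nxt t 0))
  · exact continuous_finset_sum _ fun k _ =>
      (((hBf (k+1)).comp (continuous_nxt t (k+1))).sub ((hBf (k+1)).comp (continuous_nxt t k)))

lemma isOpen_S (m : ℕ) (t : ℝ) : IsOpen (S m t) := by
  have h1 : S m t = (⋂ (p : Fin m × Fin m), {s : Fin m → ℝ | p.1 < p.2 → s p.1 < s p.2}) ∩
      ⋂ i : Fin m, {s : Fin m → ℝ | s i < t} := by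
    ext s
    simp only [Set.mem_inter_iff, Set.mem_iInter, Set.mem_setOf_eq, S, StrictMono]
    exact ⟨fun ⟨h, h'⟩ => ⟨fun p hp => h hp, h'⟩, fun ⟨h, h'⟩ => ⟨fun a b hab => h (a, b) hab, h'⟩⟩
  rw [h1]
  refine IsOpen.inter (isOpen_iInter_of_finite fun p => ?_) (isOpen_iInter_of_finite fun i => ?_)
  · by_cases hp : p.1 < p.2
    · simpa [hp] using isOpen_lt (continuous_apply p.1) (continuous_apply p.2)
    · have : {s : Fin m → ℝ | p.1 < p.2 → s p.1 < s p.2} = Set.univ := by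
        ext s; simp [hp]
      rw [this]; exact isOpen_univ
  · exact isOpen_lt (continuous_apply i) continuous_const

end OY

namespace OY
variable {B : ℝ → ℝ} {Bf : ℕ → ℝ → ℝ} {θ : ℝ}

lemma snoc_mk {m : ℕ} (y : Fin m → ℝ) (x : ℝ) (k : ℕ) (h : k < m + 1) :
    (Fin.snoc y x : Fin (m+1) → ℝ) ⟨k, h⟩ = if h' : k < m then y ⟨k, h'⟩ else x := by
  split_ifs with h'
  · have he : (⟨k, h⟩ : Fin (m+1)) = Fin.castSucc ⟨k, h'⟩ := rfl
    rw [he, Fin.snoc_castSucc]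
  · have hk : k = m := by omega
    subst hk
    have he : (⟨k, h⟩ : Fin (k+1)) = Fin.last k := rfl
    rw [he, Fin.snoc_last]

lemma nxt_snoc {m : ℕ} (t x : ℝ) (y : Fin m → ℝ) (k : ℕ) (hk : k ≤ m) :
    nxt t (Fin.snoc y x : Fin (m+1) → ℝ) k = nxt x y k := by
  unfold nxt
  rcases lt_or_eq_of_le hk with h | h
  · rw [dif_pos (by omega : k < m + 1), snoc_mk, dif_pos h]
  · subst h; rw [dif_pos (by omega : k < k + 1), snoc_mk, dif_neg (by omega)]

lemma nxt_snoc_top {m : ℕ} (t x : ℝ) (y : Fin m → ℝ) :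
    nxt t (Fin.snoc y x : Fin (m+1) → ℝ) m = x := by
  unfold nxt; rw [dif_pos (by omega : m < m + 1), snoc_mk, dif_neg (by omega)]

lemma nxt_top {m : ℕ} (t : ℝ) (s : Fin m → ℝ) : nxt t s m = t := by
  unfold nxt; rw [dif_neg (by omega)]

lemma f_snoc (m : ℕ) (t x : ℝ) (y : Fin m → ℝ) :
    f B Bf θ (m+1) t (Fin.snoc y x) =
      Real.exp (Bf (m+1) t - Bf (m+1) x) * f B Bf θ m x y := by
  unfold f
  rw [← Real.exp_add]
  congr 1
  rw [Finset.sum_range_succ]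
  have h0 : nxt t (Fin.snoc y x : Fin (m+1) → ℝ) 0 = nxt x y 0 :=
    nxt_snoc t x y 0 (Nat.zero_le m)
  have hsum : ∀ k ∈ Finset.range m,
      (Bf (k+1) (nxt t (Fin.snoc y x : Fin (m+1) → ℝ) (k+1)) -
        Bf (k+1) (nxt t (Fin.snoc y x : Fin (m+1) → ℝ) k)) =
      (Bf (k+1) (nxt x y (k+1)) - Bf (k+1) (nxt x y k)) := by
    intro k hk
    rw [Finset.mem_range] at hk
    rw [nxt_snoc t x y (k+1) hk, nxt_snoc t x y k (le_of_lt hk)]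
  rw [Finset.sum_congr rfl hsum, h0, nxt_snoc_top, nxt_top]
  ring

lemma snoc_mem_S {m : ℕ} (t x : ℝ) (y : Fin m → ℝ) :
    (Fin.snoc y x : Fin (m+1) → ℝ) ∈ S (m+1) t ↔ x < t ∧ y ∈ S m x := by
  constructor
  · rintro ⟨hmono, hlt⟩
    have hxt : x < t := by have := hlt (Fin.last m); rwa [Fin.snoc_last] at this
    refine ⟨hxt, ?_, fun j => ?_⟩
    · intro i j hij
      have := hmono (Fin.castSucc_lt_castSucc_iff.mpr hij)
      rwa [Fin.snoc_castSucc, Fin.snoc_castSucc] at this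
    · have := hmono (Fin.castSucc_lt_last j)
      rwa [Fin.snoc_castSucc, Fin.snoc_last] at this
  · rintro ⟨hxt, hmono, hlt⟩
    constructor
    · intro i j hij
      induction j using Fin.lastCases with
      | last =>
        have hi : i ≠ Fin.last m := ne_of_lt hij
        obtain ⟨i', rfl⟩ := Fin.exists_castSucc_eq.mpr hi
        rw [Fin.snoc_castSucc, Fin.snoc_last]
        exact hlt i'
      | cast j' =>
        have hi : i ≠ Fin.last m := by
          intro h; subst h
          exact absurd hij (not_lt.mpr (Fin.le_last _))
        obtain ⟨i', rfl⟩ := Fin.exists_castSucc_eq.mpr hi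
        rw [Fin.snoc_castSucc, Fin.snoc_castSucc]
        exact hmono (Fin.castSucc_lt_castSucc_iff.mp hij)
    · intro i
      induction i using Fin.lastCases with
      | last => rwa [Fin.snoc_last]
      | cast i' => rw [Fin.snoc_castSucc]; exact lt_trans (hlt i') hxt

end OY

namespace OY
variable {B : ℝ → ℝ} {Bf : ℕ → ℝ → ℝ} {θ : ℝ}

lemma lint_succ (hB : Continuous B) (hBf : ∀ k, Continuous (Bf k)) (m : ℕ) (t : ℝ) :
    ∫⁻ s in S (m+1) t, ENNReal.ofReal (f B Bf θ (m+1) t s) =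
    ∫⁻ x in Set.Iio t, ENNReal.ofReal (Real.exp (Bf (m+1) t - Bf (m+1) x)) *
      ∫⁻ y in S m x, ENNReal.ofReal (f B Bf θ m x y) := by
  have hSmeas : ∀ (k : ℕ) (u : ℝ), MeasurableSet (S k u) := fun k u => (isOpen_S k u).measurableSet
  have hfmeas : ∀ (k : ℕ) (u : ℝ), Measurable (fun s => ENNReal.ofReal (f B Bf θ k u s)) :=
    fun k u => ENNReal.measurable_ofReal.comp (continuous_f hB hBf k u).measurable
  set g : (Fin (m+1) → ℝ) → ENNReal :=
    (S (m+1) t).indicator (fun s => ENNReal.ofReal (f B Bf θ (m+1) t s)) with hg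
  have hgmeas : Measurable g := (hfmeas (m+1) t).indicator (hSmeas (m+1) t)
  have h1 : ∫⁻ s in S (m+1) t, ENNReal.ofReal (f B Bf θ (m+1) t s) = ∫⁻ s, g s := by
    rw [hg, lintegral_indicator (hSmeas (m+1) t)]
  rw [h1]
  have mp := (volume_preserving_piFinSuccAbove (fun _ : Fin (m+1) => ℝ) (Fin.last m)).symm
  rw [← mp.lintegral_comp hgmeas]
  set e := (MeasurableEquiv.piFinSuccAbove (fun _ : Fin (m+1) => ℝ) (Fin.last m)).symm
  have hsymm : ∀ (x : ℝ) (y : Fin m → ℝ), e (x, y) = Fin.snoc y x := by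
    intro x y
    show (MeasurableEquiv.piFinSuccAbove (fun _ : Fin (m+1) => ℝ) (Fin.last m)).symm (x, y) =
      Fin.snoc y x
    rw [MeasurableEquiv.piFinSuccAbove_symm_apply]
    exact Fin.insertNth_last' x y
  rw [Measure.volume_eq_prod,
    lintegral_prod _ (by exact (hgmeas.comp e.measurable).aemeasurable)]
  have h3 : ∀ x : ℝ, ∫⁻ y, g (e (x, y)) =
      (Set.Iio t).indicator (fun x => ENNReal.ofReal (Real.exp (Bf (m+1) t - Bf (m+1) x)) *
        ∫⁻ y in S m x, ENNReal.ofReal (f B Bf θ m x y)) x := by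
    intro x
    by_cases hxt : x < t
    · rw [Set.indicator_of_mem (show x ∈ Set.Iio t from hxt)]
      have : ∀ y : Fin m → ℝ, g (e (x, y)) =
          (S m x).indicator (fun y => ENNReal.ofReal (Real.exp (Bf (m+1) t - Bf (m+1) x)) *
            ENNReal.ofReal (f B Bf θ m x y)) y := by
        intro y
        rw [hsymm, hg]
        by_cases hy : y ∈ S m x
        · rw [Set.indicator_of_mem ((snoc_mem_S t x y).mpr ⟨hxt, hy⟩),
            Set.indicator_of_mem hy, f_snoc, ENNReal.ofReal_mul (Real.exp_pos _).le]
        · rw [Set.indicator_of_notMem (fun hmem => hy ((snoc_mem_S t x y).mp hmem).2),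
            Set.indicator_of_notMem hy]
      simp_rw [this]
      rw [lintegral_indicator (hSmeas m x), lintegral_const_mul _ (hfmeas m x)]
    · rw [Set.indicator_of_notMem (show x ∉ Set.Iio t by simpa using hxt)]
      have : ∀ y : Fin m → ℝ, g (e (x, y)) = 0 := by
        intro y
        rw [hsymm, hg]
        exact Set.indicator_of_notMem (fun hmem => hxt ((snoc_mem_S t x y).mp hmem).1) _
      simp_rw [this]
      exact lintegral_zero
  simp_rw [h3]
  rw [lintegral_indicator measurableSet_Iio]

end OY

namespace OY
variable {B : ℝ → ℝ} {Bf : ℕ → ℝ → ℝ} {θ : ℝ}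

lemma Zbdry_eq (m : ℕ) (t : ℝ) : Zbdry B Bf θ m t = ∫ s in S m t, f B Bf θ m t s := rfl

lemma S_zero (t : ℝ) : S 0 t = Set.univ := by
  ext s
  simp only [S, Set.mem_setOf_eq, Set.mem_univ, iff_true]
  exact ⟨Subsingleton.strictMono s, fun i => i.elim0⟩

lemma f_zero (t : ℝ) (s : Fin 0 → ℝ) : f B Bf θ 0 t s = Real.exp (-B t + θ * t) := by
  simp [f, nxt]

lemma vol_univ_zero : (volume : Measure (Fin 0 → ℝ)) Set.univ = 1 := by
  rw [volume_pi, Measure.pi_univ]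
  simp

lemma Zbdry_zero (t : ℝ) : Zbdry B Bf θ 0 t = Real.exp (-B t + θ * t) := by
  rw [Zbdry_eq, S_zero]
  simp_rw [f_zero]
  rw [Measure.restrict_univ, integral_const, measureReal_def, vol_univ_zero]
  simp

set_option maxHeartbeats 1000000 in
theorem main (hB : Continuous B) (hBf : ∀ k, Continuous (Bf k))
    (u r : ℕ → ℝ → ℝ)
    (hu0 : u 0 = B)
    (hrint : ∀ k, 1 ≤ k → ∀ t : ℝ,
      IntegrableOn (fun s => Real.exp ((u (k - 1) t - u (k - 1) s) - θ * (t - s)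
        + (Bf k t - Bf k s))) (Set.Iio t))
    (hr : ∀ k, 1 ≤ k → ∀ t : ℝ,
      r k t = Real.log (∫ s in Set.Iio t,
        Real.exp ((u (k - 1) t - u (k - 1) s) - θ * (t - s) + (Bf k t - Bf k s))))
    (hu : ∀ k, 1 ≤ k → ∀ t : ℝ, u k t = u (k - 1) t + r k 0 - r k t) :
    ∀ m, ∀ t : ℝ, IntegrableOn (f B Bf θ m t) (S m t) ∧ 0 < Zbdry B Bf θ m t ∧
      ∑ k ∈ Finset.Icc 1 m, r k t = B t - θ * t + Real.log (Zbdry B Bf θ m t) := by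
  -- the formula for u in terms of B and the r's
  have huform : ∀ m, ∀ t : ℝ, u m t = B t + ∑ k ∈ Finset.Icc 1 m, (r k 0 - r k t) := by
    intro m
    induction m with
    | zero => intro t; simp [hu0]
    | succ m ih =>
      intro t
      have h := hu (m + 1) (by omega) t
      rw [Nat.add_sub_cancel] at h
      rw [h, ih t, Finset.sum_Icc_succ_top (by omega : 1 ≤ m + 1)]
      ring
  intro m
  induction m with
  | zero =>
    intro t
    have hfin : IsFiniteMeasure (volume : Measure (Fin 0 → ℝ)) :=
      ⟨by rw [vol_univ_zero]; exact ENNReal.one_lt_top⟩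
    refine ⟨?_, ?_, ?_⟩
    · have hfc : f B Bf θ 0 t = fun _ => Real.exp (-B t + θ * t) := funext (f_zero t)
      rw [IntegrableOn, hfc]
      exact (integrable_const _).restrict
    · rw [Zbdry_zero]; exact Real.exp_pos _
    · rw [Zbdry_zero, Real.log_exp]; simp
  | succ m ih =>
    intro t
    -- notation
    set Z : ℝ → ℝ := fun x => Zbdry B Bf θ m x with hZ
    have hZpos : ∀ x, 0 < Z x := fun x => (ih x).2.1
    have hZint : ∀ x, IntegrableOn (f B Bf θ m x) (S m x) := fun x => (ih x).1
    have hZeq : ∀ x, ∑ k ∈ Finset.Icc 1 m, r k x = B x - θ * x + Real.log (Z x) :=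
      fun x => (ih x).2.2
    -- the value of u m in terms of Z
    have huZ : ∀ x : ℝ, u m x = (∑ k ∈ Finset.Icc 1 m, r k 0) + θ * x - Real.log (Z x) := by
      intro x
      rw [huform m x, Finset.sum_sub_distrib, hZeq x]
      ring
    -- pointwise identity for the integrand of r (m+1)
    have hptw : ∀ x : ℝ,
        Real.exp ((u m t - u m x) - θ * (t - x) + (Bf (m+1) t - Bf (m+1) x)) =
          Real.exp (Bf (m+1) t - Bf (m+1) x) * Z x / Z t := by
      intro x
      rw [huZ t, huZ x]
      have : (∑ k ∈ Finset.Icc 1 m, r k 0) + θ * t - Real.log (Z t) -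
          ((∑ k ∈ Finset.Icc 1 m, r k 0) + θ * x - Real.log (Z x)) - θ * (t - x) +
          (Bf (m+1) t - Bf (m+1) x) =
          (Bf (m+1) t - Bf (m+1) x) + Real.log (Z x) - Real.log (Z t) := by ring
      rw [this, Real.exp_sub, Real.exp_add, Real.exp_log (hZpos x), Real.exp_log (hZpos t)]
    -- integrability of x ↦ exp(ΔB) * Z x on Iio t
    have hint0 := hrint (m + 1) (by omega) t
    rw [Nat.add_sub_cancel] at hint0
    have hint1 : IntegrableOn (fun x => Real.exp (Bf (m+1) t - Bf (m+1) x) * Z x)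
        (Set.Iio t) := by
      have h : IntegrableOn (fun x => Z t * Real.exp ((u m t - u m x) - θ * (t - x)
          + (Bf (m+1) t - Bf (m+1) x))) (Set.Iio t) := hint0.const_mul (Z t)
      refine h.congr_fun (fun x _ => ?_) measurableSet_Iio
      simp only []
      rw [hptw x, mul_div_assoc']
      exact mul_div_cancel_left₀ _ (hZpos t).ne'
    -- the one-dimensional integral
    set J : ℝ := ∫ x in Set.Iio t, Real.exp (Bf (m+1) t - Bf (m+1) x) * Z x with hJ
    have hJnonneg : 0 ≤ J :=
      setIntegral_nonneg measurableSet_Iio fun x _ =>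
        (mul_pos (Real.exp_pos _) (hZpos x)).le
    have hJpos : 0 < J := by
      rw [hJ, setIntegral_pos_iff_support_of_nonneg_ae
        (Filter.Eventually.of_forall fun x => (mul_pos (Real.exp_pos _) (hZpos x)).le) hint1]
      have hsupp : Function.support (fun x => Real.exp (Bf (m+1) t - Bf (m+1) x) * Z x) =
          Set.univ := by
        ext x
        simp only [Function.mem_support, Set.mem_univ, iff_true]
        exact (mul_pos (Real.exp_pos _) (hZpos x)).ne'
      rw [hsupp, Set.univ_inter, Real.volume_Iio]
      simp
    -- Tonelli chain: lintegral over S (m+1) t equals ofReal J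
    have hinner : ∀ x : ℝ, ∫⁻ y in S m x, ENNReal.ofReal (f B Bf θ m x y) =
        ENNReal.ofReal (Z x) := by
      intro x
      exact (ofReal_integral_eq_lintegral_ofReal (hZint x)
        (Filter.Eventually.of_forall fun y => (f_pos m x y).le)).symm
    have hlint : ∫⁻ s in S (m+1) t, ENNReal.ofReal (f B Bf θ (m+1) t s) =
        ENNReal.ofReal J := by
      rw [lint_succ hB hBf m t]
      have : ∀ x : ℝ, ENNReal.ofReal (Real.exp (Bf (m+1) t - Bf (m+1) x)) *
          (∫⁻ y in S m x, ENNReal.ofReal (f B Bf θ m x y)) =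
          ENNReal.ofReal (Real.exp (Bf (m+1) t - Bf (m+1) x) * Z x) := by
        intro x
        rw [hinner x, ← ENNReal.ofReal_mul (Real.exp_pos _).le]
      simp_rw [this]
      rw [← ofReal_integral_eq_lintegral_ofReal hint1
        (Filter.Eventually.of_forall fun x => (mul_pos (Real.exp_pos _) (hZpos x)).le)]
    -- integrability at level m+1
    have hintS : IntegrableOn (f B Bf θ (m+1) t) (S (m+1) t) := by
      constructor
      · exact (continuous_f hB hBf (m+1) t).aestronglyMeasurable
      · rw [hasFiniteIntegral_iff_ofReal
          (Filter.Eventually.of_forall fun s => (f_pos (m+1) t s).le)]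
        rw [hlint]
        exact ENNReal.ofReal_lt_top
    -- Zbdry at level m+1 equals J
    have hZsucc : Zbdry B Bf θ (m+1) t = J := by
      have h1 : ENNReal.ofReal (Zbdry B Bf θ (m+1) t) = ENNReal.ofReal J := by
        rw [Zbdry_eq, ofReal_integral_eq_lintegral_ofReal hintS
          (Filter.Eventually.of_forall fun s => (f_pos (m+1) t s).le), hlint]
      have h2 : 0 ≤ Zbdry B Bf θ (m+1) t := by
        rw [Zbdry_eq]
        exact setIntegral_nonneg (isOpen_S (m+1) t).measurableSet fun s _ => (f_pos (m+1) t s).le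
      exact (ENNReal.ofReal_eq_ofReal_iff h2 hJnonneg).mp h1
    refine ⟨hintS, by rw [hZsucc]; exact hJpos, ?_⟩
    -- the sum formula
    rw [Finset.sum_Icc_succ_top (by omega : 1 ≤ m + 1), hZeq t]
    have hrval : r (m+1) t = Real.log J - Real.log (Z t) := by
      have h := hr (m + 1) (by omega) t
      rw [Nat.add_sub_cancel] at h
      rw [h]
      have heq : (∫ x in Set.Iio t,
          Real.exp ((u m t - u m x) - θ * (t - x) + (Bf (m+1) t - Bf (m+1) x))) = J / Z t := by
        rw [hJ, ← integral_div]
        exact setIntegral_congr_fun measurableSet_Iio fun x _ => hptw x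
      rw [heq, Real.log_div hJpos.ne' (hZpos t).ne']
    rw [hrval, hZsucc]
    ring

end OY

/-- With `u₀ = B`, `r_k(t) = log ∫_{-∞}^t exp(u_{k-1}(s,t) − θ(t−s) + B_k(s,t)) ds` and
`u_k = u_{k-1} + r_k(0) − r_k`, one has `Σ_{k=1}^n r_k(t) = B(t) − θt + log Z_n^θ(t)`. -/
theorem sum_r_eq_log_partition
    (B : ℝ → ℝ) (Bf : ℕ → ℝ → ℝ) (hB : Continuous B) (hBf : ∀ k, Continuous (Bf k))
    (hB0 : B 0 = 0) (hBf0 : ∀ k, Bf k 0 = 0)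
    (θ : ℝ) (hθ : 0 < θ) (n : ℕ) (hn : 1 ≤ n)
    (u r : ℕ → ℝ → ℝ)
    (hu0 : u 0 = B)
    (hrint : ∀ k, 1 ≤ k → ∀ t : ℝ,
      IntegrableOn (fun s => Real.exp ((u (k - 1) t - u (k - 1) s) - θ * (t - s)
        + (Bf k t - Bf k s))) (Set.Iio t))
    (hr : ∀ k, 1 ≤ k → ∀ t : ℝ,
      r k t = Real.log (∫ s in Set.Iio t,
        Real.exp ((u (k - 1) t - u (k - 1) s) - θ * (t - s) + (Bf k t - Bf k s))))
    (hu : ∀ k, 1 ≤ k → ∀ t : ℝ, u k t = u (k - 1) t + r k 0 - r k t)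
    (hZint : ∀ t : ℝ,
      IntegrableOn (fun s : Fin n → ℝ => Real.exp (-B (nxt t s 0) + θ * nxt t s 0 +
          ∑ k ∈ Finset.range n, (Bf (k + 1) (nxt t s (k + 1)) - Bf (k + 1) (nxt t s k))))
        {s : Fin n → ℝ | StrictMono s ∧ ∀ i, s i < t})
    (t : ℝ) :
    ∑ k ∈ Finset.Icc 1 n, r k t = B t - θ * t + Real.log (Zbdry B Bf θ n t) := by
  exact (OY.main hB hBf u r hu0 hrint hr hu n t).2.2
end

section
/- Exponential tilting increases the positive part: let μ be a probability measure on ℝ such that x ↦ e^{θx} is μ-integrable for θ in an open interval I, and define the tilted measures dμ_θ = e^{θx} dμ / Z(θ) with Z(θ) = ∫ e^{θx} dμ(x). Then θ ↦ E_{μ_θ}[x^+] is nondecreasing on I and θ ↦ E_{μ_θ}[x^-] is nonincreasing on I (assuming the relevant first moments are finite). -/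
open MeasureTheory

/-- Core correlation inequality via symmetrization on the product measure. -/
lemma tilt_key (μ : Measure ℝ) [IsProbabilityMeasure μ] (g f h : ℝ → ℝ)
    (hf : Integrable f μ) (hh : Integrable h μ)
    (hgf : Integrable (fun x => g x * f x) μ) (hgh : Integrable (fun x => g x * h x) μ)
    (hsign : ∀ x y, 0 ≤ (g x - g y) * (h x * f y - f x * h y)) :
    (∫ x, g x * f x ∂μ) * (∫ x, h x ∂μ) ≤ (∫ x, g x * h x ∂μ) * (∫ x, f x ∂μ) := by
  have i1 : Integrable (fun p : ℝ × ℝ => (g p.1 * h p.1) * f p.2) (μ.prod μ) := hgh.mul_prod hf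
  have i2 : Integrable (fun p : ℝ × ℝ => (g p.1 * f p.1) * h p.2) (μ.prod μ) := hgf.mul_prod hh
  have i3 : Integrable (fun p : ℝ × ℝ => h p.1 * (g p.2 * f p.2)) (μ.prod μ) := hh.mul_prod hgf
  have i4 : Integrable (fun p : ℝ × ℝ => f p.1 * (g p.2 * h p.2)) (μ.prod μ) := hf.mul_prod hgh
  have i12 : Integrable (fun p : ℝ × ℝ => (g p.1 * h p.1) * f p.2 - (g p.1 * f p.1) * h p.2) (μ.prod μ) :=
    i1.sub i2
  have i123 : Integrable (fun p : ℝ × ℝ => (g p.1 * h p.1) * f p.2 - (g p.1 * f p.1) * h p.2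
      - h p.1 * (g p.2 * f p.2)) (μ.prod μ) := i12.sub i3
  have hF : ∀ p : ℝ × ℝ, (g p.1 - g p.2) * (h p.1 * f p.2 - f p.1 * h p.2)
      = (g p.1 * h p.1) * f p.2 - (g p.1 * f p.1) * h p.2
        - h p.1 * (g p.2 * f p.2) + f p.1 * (g p.2 * h p.2) := by
    intro p; ring
  have hnn : 0 ≤ ∫ p, ((g p.1 * h p.1) * f p.2 - (g p.1 * f p.1) * h p.2
        - h p.1 * (g p.2 * f p.2) + f p.1 * (g p.2 * h p.2)) ∂(μ.prod μ) := by
    apply integral_nonneg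
    intro p
    have := hsign p.1 p.2
    rw [hF p] at this
    exact this
  have hcalc : ∫ p, ((g p.1 * h p.1) * f p.2 - (g p.1 * f p.1) * h p.2
        - h p.1 * (g p.2 * f p.2) + f p.1 * (g p.2 * h p.2)) ∂(μ.prod μ)
      = (∫ x, g x * h x ∂μ) * (∫ x, f x ∂μ) - (∫ x, g x * f x ∂μ) * (∫ x, h x ∂μ)
        - (∫ x, h x ∂μ) * (∫ x, g x * f x ∂μ) + (∫ x, f x ∂μ) * (∫ x, g x * h x ∂μ) := by
    rw [integral_add i123 i4, integral_sub i12 i3, integral_sub i1 i2,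
        integral_prod_mul (fun x => g x * h x) f, integral_prod_mul (fun x => g x * f x) h,
        integral_prod_mul h (fun x => g x * f x), integral_prod_mul f (fun x => g x * h x)]
  rw [hcalc] at hnn
  nlinarith [hnn]

lemma exp_cross (a b x y : ℝ) (hab : a ≤ b) (hxy : x ≤ y) :
    Real.exp (b * x) * Real.exp (a * y) ≤ Real.exp (a * x) * Real.exp (b * y) := by
  rw [← Real.exp_add, ← Real.exp_add]
  apply Real.exp_le_exp.mpr
  nlinarith [mul_le_mul_of_nonneg_left hxy (sub_nonneg.mpr hab)]

lemma exp_cross2 (a b x y : ℝ) (hab : a ≤ b) (hxy : y ≤ x) :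
    Real.exp (a * x) * Real.exp (b * y) ≤ Real.exp (b * x) * Real.exp (a * y) := by
  rw [← Real.exp_add, ← Real.exp_add]
  apply Real.exp_le_exp.mpr
  nlinarith [mul_le_mul_of_nonneg_left hxy (sub_nonneg.mpr hab)]

/-- Exponential tilting increases the positive part: for a probability measure `μ` on `ℝ`
with exponential moments on an open interval `I`, the tilted mean of `x⁺` is nondecreasing
in the tilt parameter and the tilted mean of `x⁻` is nonincreasing. -/
theorem tilted_posPart_monotone
    (μ : Measure ℝ) [IsProbabilityMeasure μ] (I : Set ℝ) (hI : IsOpen I)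
    (hexp : ∀ θ ∈ I, Integrable (fun x => Real.exp (θ * x)) μ)
    (hpos : ∀ θ ∈ I, Integrable (fun x => max x 0 * Real.exp (θ * x)) μ)
    (hneg : ∀ θ ∈ I, Integrable (fun x => max (-x) 0 * Real.exp (θ * x)) μ) :
    MonotoneOn (fun θ =>
        (∫ x, max x 0 * Real.exp (θ * x) ∂μ) / (∫ x, Real.exp (θ * x) ∂μ)) I ∧
    AntitoneOn (fun θ =>
        (∫ x, max (-x) 0 * Real.exp (θ * x) ∂μ) / (∫ x, Real.exp (θ * x) ∂μ)) I := by
  have hZpos : ∀ θ ∈ I, 0 < ∫ x, Real.exp (θ * x) ∂μ := by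
    intro θ hθ
    exact integral_exp_pos (hexp θ hθ)
  constructor
  · intro a ha b hb hab
    have key := tilt_key μ (fun x => max x 0) (fun x => Real.exp (a * x))
      (fun x => Real.exp (b * x)) (hexp a ha) (hexp b hb) (hpos a ha) (hpos b hb) ?_
    · exact (div_le_div_iff₀ (hZpos a ha) (hZpos b hb)).mpr key
    · intro x y
      rcases le_total x y with hxy | hxy
      · have h1 : max x 0 - max y 0 ≤ 0 := by
          simp only [sub_nonpos]; exact max_le_max hxy le_rfl
        have h2 := exp_cross a b x y hab hxy
        nlinarith
      · have h1 : (0:ℝ) ≤ max x 0 - max y 0 := by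
          simp only [sub_nonneg]; exact max_le_max hxy le_rfl
        have h2 := exp_cross2 a b x y hab hxy
        nlinarith
  · intro a ha b hb hab
    have key := tilt_key μ (fun x => -(max (-x) 0)) (fun x => Real.exp (a * x))
      (fun x => Real.exp (b * x)) (hexp a ha) (hexp b hb)
      ((hneg a ha).neg.congr (Filter.Eventually.of_forall fun x => by
        simp only [Pi.neg_apply]; ring))
      ((hneg b hb).neg.congr (Filter.Eventually.of_forall fun x => by
        simp only [Pi.neg_apply]; ring)) ?_
    · simp only [neg_mul, integral_neg, neg_mul] at key
      have key' : (∫ x, max (-x) 0 * Real.exp (b * x) ∂μ) * (∫ x, Real.exp (a * x) ∂μ)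
          ≤ (∫ x, max (-x) 0 * Real.exp (a * x) ∂μ) * (∫ x, Real.exp (b * x) ∂μ) := by
        linarith
      exact (div_le_div_iff₀ (hZpos b hb) (hZpos a ha)).mpr key'
    · intro x y
      rcases le_total x y with hxy | hxy
      · have h1 : -(max (-x) 0) - -(max (-y) 0) ≤ 0 := by
          have : max (-y) 0 ≤ max (-x) 0 := max_le_max (neg_le_neg hxy) le_rfl
          linarith
        have h2 := exp_cross a b x y hab hxy
        show 0 ≤ (-(max (-x) 0) - -(max (-y) 0)) *
          (Real.exp (b*x) * Real.exp (a*y) - Real.exp (a*x) * Real.exp (b*y))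
        nlinarith
      · have h1 : (0:ℝ) ≤ -(max (-x) 0) - -(max (-y) 0) := by
          have : max (-x) 0 ≤ max (-y) 0 := max_le_max (neg_le_neg hxy) le_rfl
          linarith
        have h2 := exp_cross2 a b x y hab hxy
        show 0 ≤ (-(max (-x) 0) - -(max (-y) 0)) *
          (Real.exp (b*x) * Real.exp (a*y) - Real.exp (a*x) * Real.exp (b*y))
        nlinarith
end
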